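/- Let w : ℝ × ℝ → ℝ be a smooth function of (x,t) with w_xx(x,t) ≠ 0 for all (x,t), satisfying the evolution equation w_t = −1/w_xx. Define η : ℝ × ℝ → ℝ by η = w_xxx / w_xx³ − 3·2^{−2/3} / w_xx. Then η satisfies the linearized equation ∂η/∂t = ( 1/w_xx² )·∂²η/∂x² at every point (x,t). -/

import Mathlib

/-- Partial derivative with respect to the first (space) variable. -/
noncomputable def pdx (f : ℝ × ℝ → ℝ) : ℝ × ℝ → ℝ :=
  fun p => deriv (fun x => f (x, p.2)) p.1

/-- Partial derivative with respect to the second (time) variable. -/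
noncomputable def pdt (f : ℝ × ℝ → ℝ) : ℝ × ℝ → ℝ :=
  fun p => deriv (fun t => f (p.1, t)) p.2

lemma slice_x {f : ℝ × ℝ → ℝ} (hf : ContDiff ℝ (⊤ : ℕ∞) f) (p : ℝ × ℝ) :
    HasDerivAt (fun x => f (x, p.2)) (pdx f p) p.1 := by
  have h : DifferentiableAt ℝ (fun x : ℝ => f (x, p.2)) p.1 :=
    (hf.differentiable (by norm_num) (p.1, p.2)).comp p.1
      (DifferentiableAt.prodMk differentiableAt_id (differentiableAt_const _))
  exact h.hasDerivAt

lemma slice_t {f : ℝ × ℝ → ℝ} (hf : ContDiff ℝ (⊤ : ℕ∞) f) (p : ℝ × ℝ) :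
    HasDerivAt (fun t => f (p.1, t)) (pdt f p) p.2 := by
  have h : DifferentiableAt ℝ (fun t : ℝ => f (p.1, t)) p.2 :=
    (hf.differentiable (by norm_num) (p.1, p.2)).comp p.2
      (DifferentiableAt.prodMk (differentiableAt_const _) differentiableAt_id)
  exact h.hasDerivAt

lemma pdx_fderiv {f : ℝ × ℝ → ℝ} (hf : Differentiable ℝ f) (p : ℝ × ℝ) :
    pdx f p = fderiv ℝ f p (1, 0) := by
  have h : HasDerivAt (fun x : ℝ => f (x, p.2)) (fderiv ℝ f p ((1 : ℝ), (0 : ℝ))) p.1 :=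
    (hf p).hasFDerivAt.comp_hasDerivAt p.1
      (HasDerivAt.prodMk (hasDerivAt_id p.1) (hasDerivAt_const p.1 p.2))
  exact h.deriv.symm ▸ rfl

lemma pdt_fderiv {f : ℝ × ℝ → ℝ} (hf : Differentiable ℝ f) (p : ℝ × ℝ) :
    pdt f p = fderiv ℝ f p (0, 1) := by
  have h : HasDerivAt (fun t : ℝ => f (p.1, t)) (fderiv ℝ f p ((0 : ℝ), (1 : ℝ))) p.2 :=
    (hf p).hasFDerivAt.comp_hasDerivAt p.2
      (HasDerivAt.prodMk (hasDerivAt_const p.2 p.1) (hasDerivAt_id p.2))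
  exact h.deriv.symm ▸ rfl

lemma contDiff_pdx {f : ℝ × ℝ → ℝ} (hf : ContDiff ℝ (⊤ : ℕ∞) f) :
    ContDiff ℝ (⊤ : ℕ∞) (pdx f) := by
  have h1 : ContDiff ℝ (⊤ : ℕ∞) (fun p : ℝ × ℝ => fderiv ℝ f p (1, 0)) :=
    (hf.fderiv_right (by simp)).clm_apply contDiff_const
  have : pdx f = fun p : ℝ × ℝ => fderiv ℝ f p (1, 0) :=
    funext fun p => pdx_fderiv (hf.differentiable (by norm_num)) p
  rw [this]; exact h1

lemma pdt_pdx_comm {f : ℝ × ℝ → ℝ} (hf : ContDiff ℝ (⊤ : ℕ∞) f) (p : ℝ × ℝ) :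
    pdt (pdx f) p = pdx (pdt f) p := by
  set F := fderiv ℝ f with hF
  have hFd : ContDiff ℝ (⊤ : ℕ∞) F := hf.fderiv_right (by simp)
  have hF'' : HasFDerivAt F (fderiv ℝ F p) p := (hFd.differentiable (by norm_num) p).hasFDerivAt
  have hsymm := second_derivative_symmetric
    (fun y => (hf.differentiable (by norm_num) y).hasFDerivAt) hF'' ((1:ℝ),(0:ℝ)) ((0:ℝ),(1:ℝ))
  have hfx : pdx f = fun p : ℝ × ℝ => F p (1, 0) :=
    funext fun q => pdx_fderiv (hf.differentiable (by norm_num)) q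
  have hft : pdt f = fun p : ℝ × ℝ => F p (0, 1) :=
    funext fun q => pdt_fderiv (hf.differentiable (by norm_num)) q
  have hev : ∀ v : ℝ × ℝ, HasFDerivAt (fun q : ℝ × ℝ => F q v)
      ((ContinuousLinearMap.apply ℝ ℝ v).comp (fderiv ℝ F p)) p :=
    fun v => (ContinuousLinearMap.apply ℝ ℝ v).hasFDerivAt.comp p hF''
  have h1 : pdt (pdx f) p = fderiv ℝ F p (0, 1) (1, 0) := by
    rw [hfx]
    have := ((hev (1, 0)).comp_hasDerivAt p.2
      (HasDerivAt.prodMk (hasDerivAt_const p.2 p.1) (hasDerivAt_id p.2))).deriv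
    simpa [pdt, Function.comp_def] using this
  have h2 : pdx (pdt f) p = fderiv ℝ F p (1, 0) (0, 1) := by
    rw [hft]
    have := ((hev (0, 1)).comp_hasDerivAt p.1
      (HasDerivAt.prodMk (hasDerivAt_id p.1) (hasDerivAt_const p.1 p.2))).deriv
    simpa [pdx, Function.comp_def] using this
  rw [h1, h2, hsymm]

lemma alg1 (v A B D : ℝ) (hv : v ≠ 0) :
    (D * v ^ 2 - B * (2 * v ^ 1 * A)) / (v ^ 2) ^ 2
      - (2 * (2 * A ^ 1 * B) * v ^ 3 - 2 * A ^ 2 * (3 * v ^ 2 * A)) / (v ^ 3) ^ 2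
    = D / v ^ 2 - 6 * A * B / v ^ 3 + 6 * A ^ 3 / v ^ 4 := by
  field_simp
  ring

lemma alg2 (c v A B : ℝ) (hv : v ≠ 0) :
    (B * v ^ 3 - A * (3 * v ^ 2 * A)) / (v ^ 3) ^ 2 - (0 * v - c * A) / v ^ 2
    = B / v ^ 3 - 3 * A ^ 2 / v ^ 4 + c * A / v ^ 2 := by
  field_simp
  ring

lemma alg3 (c v A B D : ℝ) (hv : v ≠ 0) :
    (D * v ^ 3 - B * (3 * v ^ 2 * A)) / (v ^ 3) ^ 2
      - (3 * (2 * A ^ 1 * B) * v ^ 4 - 3 * A ^ 2 * (4 * v ^ 3 * A)) / (v ^ 4) ^ 2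
      + (c * B * v ^ 2 - c * A * (2 * v ^ 1 * A)) / (v ^ 2) ^ 2
    = D / v ^ 3 - 9 * A * B / v ^ 4 + 12 * A ^ 3 / v ^ 5 + c * B / v ^ 2
      - 2 * c * A ^ 2 / v ^ 3 := by
  field_simp
  ring

lemma alg4 (c v A B D : ℝ) (hv : v ≠ 0) :
    ((D / v ^ 2 - 6 * A * B / v ^ 3 + 6 * A ^ 3 / v ^ 4) * v ^ 3
        - A * (3 * v ^ 2 * (B / v ^ 2 - 2 * A ^ 2 / v ^ 3))) / (v ^ 3) ^ 2
      - (0 * v - c * (B / v ^ 2 - 2 * A ^ 2 / v ^ 3)) / v ^ 2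
    = (1 / v ^ 2) * (D / v ^ 3 - 9 * A * B / v ^ 4 + 12 * A ^ 3 / v ^ 5
        + c * B / v ^ 2 - 2 * c * A ^ 2 / v ^ 3) := by
  field_simp
  ring

lemma calc_main (c : ℝ) (u a b d : ℝ × ℝ → ℝ)
    (su : ContDiff ℝ (⊤ : ℕ∞) u)
    (ha : a = pdx u) (hb : b = pdx a) (hd : d = pdx b)
    (hu0 : ∀ p, u p ≠ 0)
    (hut : ∀ p, pdt u p = b p / u p ^ 2 - 2 * a p ^ 2 / u p ^ 3) :
    ∀ p : ℝ × ℝ, pdt (fun p => a p / u p ^ 3 - c / u p) p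
      = (1 / u p ^ 2) * pdx (pdx (fun p => a p / u p ^ 3 - c / u p)) p := by
  have sa : ContDiff ℝ (⊤ : ℕ∞) a := ha ▸ contDiff_pdx su
  have sb : ContDiff ℝ (⊤ : ℕ∞) b := hb ▸ contDiff_pdx sa
  have sd : ContDiff ℝ (⊤ : ℕ∞) d := hd ▸ contDiff_pdx sb
  -- x-slices with clean derivative names
  have sxu : ∀ p : ℝ × ℝ, HasDerivAt (fun x => u (x, p.2)) (a p) p.1 := by
    intro p; rw [ha]; exact slice_x su p
  have sxa : ∀ p : ℝ × ℝ, HasDerivAt (fun x => a (x, p.2)) (b p) p.1 := by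
    intro p; rw [hb]; exact slice_x sa p
  have sxb : ∀ p : ℝ × ℝ, HasDerivAt (fun x => b (x, p.2)) (d p) p.1 := by
    intro p; rw [hd]; exact slice_x sb p
  -- time derivative of a
  have hat : ∀ p : ℝ × ℝ, pdt a p
      = d p / u p ^ 2 - 6 * a p * b p / u p ^ 3 + 6 * a p ^ 3 / u p ^ 4 := by
    intro p
    have h0 : pdt a p = pdx (pdt u) p := by rw [ha]; exact pdt_pdx_comm su p
    have h1 : pdx (pdt u) p
        = pdx (fun p => b p / u p ^ 2 - 2 * a p ^ 2 / u p ^ 3) p := by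
      have : pdt u = fun p => b p / u p ^ 2 - 2 * a p ^ 2 / u p ^ 3 := funext hut
      rw [this]
    have h := ((sxb p).div ((sxu p).pow 2) (pow_ne_zero 2 (hu0 p))).sub
      ((((sxa p).pow 2).const_mul 2).div ((sxu p).pow 3) (pow_ne_zero 3 (hu0 p)))
    have h2 : pdx (fun p => b p / u p ^ 2 - 2 * a p ^ 2 / u p ^ 3) p
        = (d p * u p ^ 2 - b p * (2 * u p ^ 1 * a p)) / (u p ^ 2) ^ 2
          - (2 * (2 * a p ^ 1 * b p) * u p ^ 3 - 2 * a p ^ 2 * (3 * u p ^ 2 * a p))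
              / (u p ^ 3) ^ 2 := h.deriv
    rw [h0, h1, h2]
    exact alg1 (u p) (a p) (b p) (d p) (hu0 p)
  -- first x-derivative of η
  have hx1 : pdx (fun p => a p / u p ^ 3 - c / u p)
      = fun p => b p / u p ^ 3 - 3 * a p ^ 2 / u p ^ 4 + c * a p / u p ^ 2 := by
    funext p
    have h := ((sxa p).div ((sxu p).pow 3) (pow_ne_zero 3 (hu0 p))).sub
      ((hasDerivAt_const p.1 c).div (sxu p) (hu0 p))
    have h2 : pdx (fun p => a p / u p ^ 3 - c / u p) p
        = (b p * u p ^ 3 - a p * (3 * u p ^ 2 * a p)) / (u p ^ 3) ^ 2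
          - (0 * u p - c * a p) / u p ^ 2 := h.deriv
    rw [h2]
    exact alg2 c (u p) (a p) (b p) (hu0 p)
  -- second x-derivative of η
  have hx2 : ∀ p : ℝ × ℝ, pdx (pdx (fun p => a p / u p ^ 3 - c / u p)) p
      = d p / u p ^ 3 - 9 * a p * b p / u p ^ 4 + 12 * a p ^ 3 / u p ^ 5
        + c * b p / u p ^ 2 - 2 * c * a p ^ 2 / u p ^ 3 := by
    intro p
    rw [hx1]
    have h := (((sxb p).div ((sxu p).pow 3) (pow_ne_zero 3 (hu0 p))).sub
        ((((sxa p).pow 2).const_mul 3).div ((sxu p).pow 4) (pow_ne_zero 4 (hu0 p)))).add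
      (((sxa p).const_mul c).div ((sxu p).pow 2) (pow_ne_zero 2 (hu0 p)))
    have h2 : pdx (fun p => b p / u p ^ 3 - 3 * a p ^ 2 / u p ^ 4 + c * a p / u p ^ 2) p
        = (d p * u p ^ 3 - b p * (3 * u p ^ 2 * a p)) / (u p ^ 3) ^ 2
          - (3 * (2 * a p ^ 1 * b p) * u p ^ 4 - 3 * a p ^ 2 * (4 * u p ^ 3 * a p))
              / (u p ^ 4) ^ 2
          + ((c * b p) * u p ^ 2 - c * a p * (2 * u p ^ 1 * a p)) / (u p ^ 2) ^ 2 := h.deriv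
    rw [h2]
    exact alg3 c (u p) (a p) (b p) (d p) (hu0 p)
  -- time derivative of η and conclusion
  intro p
  have stu : HasDerivAt (fun t => u (p.1, t)) (pdt u p) p.2 := slice_t su p
  have sta : HasDerivAt (fun t => a (p.1, t)) (pdt a p) p.2 := slice_t sa p
  have h := (sta.div (stu.pow 3) (pow_ne_zero 3 (hu0 p))).sub
    ((hasDerivAt_const p.2 c).div stu (hu0 p))
  have h2 : pdt (fun p => a p / u p ^ 3 - c / u p) p
      = (pdt a p * u p ^ 3 - a p * (3 * u p ^ 2 * pdt u p)) / (u p ^ 3) ^ 2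
        - (0 * u p - c * pdt u p) / u p ^ 2 := h.deriv
  rw [h2, hat p, hut p, hx2 p]
  exact alg4 c (u p) (a p) (b p) (d p) (hu0 p)

lemma alg0 (v A B : ℝ) (hv : v ≠ 0) :
    (B * v ^ 2 - A * (2 * v ^ 1 * A)) / (v ^ 2) ^ 2 = B / v ^ 2 - 2 * A ^ 2 / v ^ 3 := by
  field_simp

/-- Subcase 1.3c: for a solution of `w_t = −1/w_xx`, the function
`η = w_xxx / w_xx³ − 3·2^{−2/3} / w_xx` satisfies the linearized
(Lie–Bäcklund symmetry) equation. -/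
theorem subcase13c_third_order_symmetry
    (w : ℝ × ℝ → ℝ) (hw : ContDiff ℝ (⊤ : ℕ∞) w)
    (hwxx : ∀ p : ℝ × ℝ, pdx (pdx w) p ≠ 0)
    (heq : ∀ p : ℝ × ℝ, pdt w p = -1 / pdx (pdx w) p)
    (η : ℝ × ℝ → ℝ)
    (hη : η = fun p =>
      pdx (pdx (pdx w)) p / (pdx (pdx w) p) ^ 3
        - 3 * (2 : ℝ) ^ (-(2 : ℝ) / 3) / pdx (pdx w) p) :
    ∀ p : ℝ × ℝ, pdt η p = (1 / (pdx (pdx w) p) ^ 2) * pdx (pdx η) p := by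
  subst hη
  have sw1 : ContDiff ℝ (⊤ : ℕ∞) (pdx w) := contDiff_pdx hw
  have su : ContDiff ℝ (⊤ : ℕ∞) (pdx (pdx w)) := contDiff_pdx sw1
  have sa : ContDiff ℝ (⊤ : ℕ∞) (pdx (pdx (pdx w))) := contDiff_pdx su
  have hwt : pdt w = fun p => -1 / pdx (pdx w) p := funext heq
  have h1 : pdx (pdt w)
      = fun p => pdx (pdx (pdx w)) p / pdx (pdx w) p ^ 2 := by
    funext p
    have h := (hasDerivAt_const p.1 (-1 : ℝ)).div (slice_x su p) (hwxx p)
    have h2 : pdx (pdt w) p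
        = (0 * pdx (pdx w) p - -1 * pdx (pdx (pdx w)) p) / pdx (pdx w) p ^ 2 := by
      rw [hwt]; exact h.deriv
    rw [h2]; ring
  have h2 : pdx (pdx (pdt w))
      = fun p => pdx (pdx (pdx (pdx w))) p / pdx (pdx w) p ^ 2
          - 2 * pdx (pdx (pdx w)) p ^ 2 / pdx (pdx w) p ^ 3 := by
    rw [h1]
    funext p
    have h := (slice_x sa p).div ((slice_x su p).pow 2) (pow_ne_zero 2 (hwxx p))
    have h2' : pdx (fun p => pdx (pdx (pdx w)) p / pdx (pdx w) p ^ 2) p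
        = (pdx (pdx (pdx (pdx w))) p * pdx (pdx w) p ^ 2
            - pdx (pdx (pdx w)) p * (2 * pdx (pdx w) p ^ 1 * pdx (pdx (pdx w)) p))
          / (pdx (pdx w) p ^ 2) ^ 2 := h.deriv
    rw [h2']
    exact alg0 (pdx (pdx w) p) (pdx (pdx (pdx w)) p) (pdx (pdx (pdx (pdx w))) p) (hwxx p)
  have hut : ∀ p : ℝ × ℝ, pdt (pdx (pdx w)) p
      = pdx (pdx (pdx (pdx w))) p / pdx (pdx w) p ^ 2
        - 2 * pdx (pdx (pdx w)) p ^ 2 / pdx (pdx w) p ^ 3 := by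
    intro p
    have e1 : pdt (pdx (pdx w)) p = pdx (pdt (pdx w)) p := pdt_pdx_comm sw1 p
    have e2 : pdt (pdx w) = pdx (pdt w) := funext (pdt_pdx_comm hw)
    rw [e1, e2]
    exact congrFun h2 p
  exact calc_main (3 * (2 : ℝ) ^ (-(2 : ℝ) / 3)) (pdx (pdx w)) (pdx (pdx (pdx w)))
    (pdx (pdx (pdx (pdx w)))) (pdx (pdx (pdx (pdx (pdx w))))) su rfl rfl rfl hwxx hut
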